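/- Let μ be a Borel probability measure on [0,∞) with μ ≠ δ₀. For every z in the upper half-plane ℂ⁺, η_μ(z) ≠ 0 and the principal argument of z/η_μ(z) lies in the half-open interval (−π + arg z, 0]. -/

import Mathlib

open MeasureTheory Filter

/-- ψ-transform of a measure on [0,∞) (viewed as a measure on ℝ). -/
noncomputable def psiR (μ : Measure ℝ) (z : ℂ) : ℂ :=
  ∫ s : ℝ, z * (s : ℂ) / (1 - z * (s : ℂ)) ∂μ

/-- η-transform of a measure on [0,∞). -/
noncomputable def etaR (μ : Measure ℝ) (z : ℂ) : ℂ :=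
  psiR μ z / (1 + psiR μ z)

namespace Stmt4Aux

open Complex

lemma arg_pos_of_im_pos {A : ℂ} (hA : 0 < A.im) : 0 < A.arg :=
  lt_of_le_of_ne (arg_nonneg_iff.2 hA.le) fun h => by
    have := (arg_eq_zero_iff.mp h.symm).2; linarith

lemma arg_lt_pi_of_im_pos {A : ℂ} (hA : 0 < A.im) : A.arg < Real.pi :=
  lt_of_le_of_ne (arg_le_pi A) fun h => by
    have := (arg_eq_pi_iff.mp h).2; linarith

lemma arg_div_of_im_pos {A B : ℂ} (hA : 0 < A.im) (hB : 0 < B.im) :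
    (A / B).arg = A.arg - B.arg := by
  have hA0 : A ≠ 0 := fun h => by simp [h] at hA
  have hB0 : B ≠ 0 := fun h => by simp [h] at hB
  have h1 := arg_pos_of_im_pos hA
  have h2 := arg_lt_pi_of_im_pos hA
  have h3 := arg_pos_of_im_pos hB
  have h4 := arg_lt_pi_of_im_pos hB
  have hinv : (B⁻¹).arg = -B.arg := by
    rw [arg_inv, if_neg (by intro h; rw [h] at h4; exact lt_irrefl _ h4)]
  have hmul : (A * B⁻¹).arg = A.arg + (B⁻¹).arg := by
    refine (arg_mul_eq_add_arg_iff hA0 (inv_ne_zero hB0)).2 ?_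
    rw [hinv]
    constructor
    · linarith
    · linarith
  rw [div_eq_mul_inv, hmul, hinv]
  ring

end Stmt4Aux

open Complex Stmt4Aux

theorem stmt4 (μ : Measure ℝ) [IsProbabilityMeasure μ]
    (hsupp : μ (Set.Iio 0) = 0) (hμ : μ ≠ Measure.dirac 0)
    (z : ℂ) (hz : 0 < z.im) :
    etaR μ z ≠ 0 ∧ (z / etaR μ z).arg ∈ Set.Ioc (-Real.pi + z.arg) 0 := by
  have hz0 : z ≠ 0 := fun h => by simp [h] at hz
  set n : ℝ := Complex.normSq z with hn_def
  have hn : 0 < n := normSq_pos.2 hz0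
  -- the denominator never vanishes
  have hne : ∀ s : ℝ, (1 : ℂ) - z * s ≠ 0 := by
    intro s h
    have him := congrArg Complex.im h
    simp [Complex.sub_im, Complex.mul_im] at him
    rcases him with h' | h'
    · exact hz.ne' (by linarith)
    · rw [h'] at h; simp at h
  -- the weight function
  set w : ℝ → ℝ := fun s => (Complex.normSq (1 - z * s))⁻¹ with hw_def
  have hwpos : ∀ s, 0 < w s := fun s => inv_pos.2 (normSq_pos.2 (hne s))
  have hwcont : Continuous w := by
    apply Continuous.inv₀
    · exact Complex.continuous_normSq.comp (by continuity)
    · exact fun s => (normSq_pos.2 (hne s)).ne'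
  have hexp : ∀ s : ℝ, Complex.normSq (1 - z * s) = (1 - z.re * s) ^ 2 + (z.im * s) ^ 2 := by
    intro s
    simp [Complex.normSq_apply, Complex.sub_re, Complex.sub_im, Complex.mul_re, Complex.mul_im]
    ring
  have hnval : n = z.re ^ 2 + z.im ^ 2 := by
    simp [hn_def, Complex.normSq_apply]; ring
  -- lower bound for the denominator norm
  have hlb : ∀ s : ℝ, z.im ^ 2 / n ≤ Complex.normSq (1 - z * s) := by
    intro s
    rw [hexp s, div_le_iff₀ hn, hnval]
    nlinarith [sq_nonneg (z.re - (z.re ^ 2 + z.im ^ 2) * s)]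
  -- bounds for the weights
  have hwle : ∀ s, w s ≤ n / z.im ^ 2 := by
    intro s
    have h1 : 0 < z.im ^ 2 / n := by positivity
    calc w s ≤ (z.im ^ 2 / n)⁻¹ := by
          apply inv_anti₀ h1 (hlb s)
      _ = n / z.im ^ 2 := by rw [inv_div]
  have hs2wle : ∀ s, s ^ 2 * w s ≤ 1 / z.im ^ 2 := by
    intro s
    have h1 : z.im ^ 2 * s ^ 2 ≤ Complex.normSq (1 - z * s) := by
      rw [hexp s]; nlinarith [sq_nonneg (1 - z.re * s)]
    rw [le_div_iff₀ (by positivity)]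
    have h2 : (z.im ^ 2 * s ^ 2) * w s ≤ Complex.normSq (1 - z * s) * w s :=
      mul_le_mul_of_nonneg_right h1 (hwpos s).le
    have h3 : Complex.normSq (1 - z * s) * w s = 1 := by
      rw [hw_def]; exact mul_inv_cancel₀ (normSq_pos.2 (hne s)).ne'
    calc s ^ 2 * w s * z.im ^ 2 = (z.im ^ 2 * s ^ 2) * w s := by ring
      _ ≤ 1 := by rw [← h3]; exact h2
  -- integrability of the weights
  have intW : Integrable w μ := by
    refine (integrable_const (n / z.im ^ 2)).mono' hwcont.aestronglyMeasurable ?_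
    exact ae_of_all _ fun s => by
      rw [Real.norm_eq_abs, _root_.abs_of_pos (hwpos s)]; exact hwle s
  have intS2W : Integrable (fun s => s ^ 2 * w s) μ := by
    refine (integrable_const (1 / z.im ^ 2)).mono' ((continuous_pow 2).mul hwcont).aestronglyMeasurable ?_
    exact ae_of_all _ fun s => by
      rw [Real.norm_eq_abs, _root_.abs_of_nonneg (mul_nonneg (sq_nonneg s) (hwpos s).le)]
      exact hs2wle s
  have intSW : Integrable (fun s => s * w s) μ := by
    refine (intW.add intS2W).mono' (continuous_id.mul hwcont).aestronglyMeasurable ?_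
    refine ae_of_all _ fun s => ?_
    rw [Real.norm_eq_abs, abs_mul, _root_.abs_of_pos (hwpos s)]
    have habs : |s| ≤ 1 + s ^ 2 := by nlinarith [sq_nonneg (|s| - 1), _root_.sq_abs s]
    calc |s| * w s ≤ (1 + s ^ 2) * w s := mul_le_mul_of_nonneg_right habs (hwpos s).le
      _ = w s + s ^ 2 * w s := by ring
  -- the real moments
  set P : ℝ := ∫ s, w s ∂μ with hP_def
  set Q : ℝ := ∫ s, s * w s ∂μ with hQ_def
  set R : ℝ := ∫ s, s ^ 2 * w s ∂μ with hR_def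
  have hP : 0 < P := by
    rw [hP_def]
    refine (integral_pos_iff_support_of_nonneg (fun s => (hwpos s).le) intW).2 ?_
    have : Function.support w = Set.univ := by
      ext s; simp [Function.support, (hwpos s).ne']
    rw [this, measure_univ]; exact zero_lt_one
  -- μ {0} < 1
  have hμ0 : μ {(0 : ℝ)} < 1 := by
    by_contra h
    push_neg at h
    have h1 : μ {(0 : ℝ)} = 1 := le_antisymm prob_le_one h
    have hc : μ ({(0 : ℝ)}ᶜ) = 0 := by
      have := measure_compl (measurableSet_singleton (0 : ℝ)) (measure_ne_top μ _)
      rw [h1, measure_univ] at this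
      simpa using this
    apply hμ
    refine Measure.ext fun E hE => ?_
    rw [Measure.dirac_apply' _ hE]
    by_cases h0 : (0 : ℝ) ∈ E
    · rw [Set.indicator_of_mem h0]
      refine le_antisymm prob_le_one ?_
      calc (1 : ENNReal) = μ {(0 : ℝ)} := h1.symm
        _ ≤ μ E := measure_mono (Set.singleton_subset_iff.2 h0)
    · rw [Set.indicator_of_notMem h0]
      refine le_antisymm ?_ (zero_le)
      have hsub : E ⊆ {(0 : ℝ)}ᶜ := by
        intro x hx hx0
        rw [Set.mem_singleton_iff] at hx0
        exact h0 (hx0 ▸ hx)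
      exact (measure_mono hsub).trans hc.le
  have hae : ∀ᵐ s ∂μ, 0 ≤ s := by
    rw [ae_iff]
    have : {s : ℝ | ¬ 0 ≤ s} = Set.Iio 0 := by ext s; simp
    rw [this]; exact hsupp
  have hQ : 0 < Q := by
    have heq : (fun s => s * w s) =ᵐ[μ] (fun s => |s| * w s) :=
      hae.mono fun s hs => by simp [_root_.abs_of_nonneg hs]
    rw [hQ_def, integral_congr_ae heq]
    refine (integral_pos_iff_support_of_nonneg
      (fun s => mul_nonneg (abs_nonneg s) (hwpos s).le) (intSW.congr heq)).2 ?_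
    have hsupp' : Function.support (fun s => |s| * w s) = {(0 : ℝ)}ᶜ := by
      ext s
      simp [Function.support, (hwpos s).ne', abs_eq_zero]
    rw [hsupp']
    have := measure_compl (measurableSet_singleton (0 : ℝ)) (measure_ne_top μ _)
    rw [measure_univ] at this
    rw [this]
    exact tsub_pos_iff_lt.2 hμ0
  have hR : 0 ≤ R := integral_nonneg fun s => mul_nonneg (sq_nonneg s) (hwpos s).le
  -- Cauchy-Schwarz via discriminant
  have hCS : Q ^ 2 ≤ P * R := by
    have hquad : ∀ x : ℝ, 0 ≤ R * (x * x) + (2 * Q) * x + P := by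
      intro x
      have i1 : Integrable (fun s : ℝ => (x * x) * (s ^ 2 * w s)) μ := intS2W.const_mul _
      have i2 : Integrable (fun s : ℝ => (2 * x) * (s * w s)) μ := intSW.const_mul _
      have i3 : Integrable (fun s : ℝ => (2 * x) * (s * w s) + w s) μ := i2.add intW
      have heq : R * (x * x) + (2 * Q) * x + P = ∫ s, (x * s + 1) ^ 2 * w s ∂μ := by
        have h1 : (∫ s, (x * s + 1) ^ 2 * w s ∂μ)
            = ∫ s, ((x * x) * (s ^ 2 * w s) + ((2 * x) * (s * w s) + w s)) ∂μ :=
          integral_congr_ae (ae_of_all _ fun s => by ring)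
        rw [h1, integral_add i1 i3, integral_add i2 intW, integral_const_mul,
          integral_const_mul]
        ring
      rw [heq]
      exact integral_nonneg fun s => mul_nonneg (sq_nonneg _) (hwpos s).le
    have := discrim_le_zero hquad
    rw [discrim] at this
    nlinarith
  -- pointwise complex identities
  have hkey : ∀ s : ℝ, ((1 : ℂ) - z * s)⁻¹ = ((w s : ℝ) : ℂ) * (1 - (starRingEnd ℂ) z * s) := by
    intro s
    rw [Complex.inv_def]
    have hconj : (starRingEnd ℂ) ((1 : ℂ) - z * s) = 1 - (starRingEnd ℂ) z * s := by
      simp [map_sub, map_mul, Complex.conj_ofReal]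
    rw [hconj, hw_def]
    push_cast
    ring
  have hf1 : ∀ s : ℝ, z * (s : ℂ) / (1 - z * s)
      = z * ((s * w s : ℝ) : ℂ) - (n : ℂ) * ((s ^ 2 * w s : ℝ) : ℂ) := by
    intro s
    rw [div_eq_mul_inv, hkey s]
    have hmc : z * (starRingEnd ℂ) z = (n : ℂ) := Complex.mul_conj z
    push_cast
    linear_combination (-(s : ℂ) ^ 2 * (w s : ℂ)) * hmc
  have hf2 : ∀ s : ℝ, ((1 : ℂ) - z * s)⁻¹
      = ((w s : ℝ) : ℂ) - (starRingEnd ℂ) z * ((s * w s : ℝ) : ℂ) := by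
    intro s
    rw [hkey s]
    push_cast
    ring
  -- psiR in terms of the moments
  have hcoe : ∀ f : ℝ → ℝ, ∫ s, ((f s : ℝ) : ℂ) ∂μ = ((∫ s, f s ∂μ : ℝ) : ℂ) :=
    fun f => integral_ofReal
  have iB1 : Integrable (fun s : ℝ => z * ((s * w s : ℝ) : ℂ)) μ := intSW.ofReal.const_mul z
  have iB2 : Integrable (fun s : ℝ => (n : ℂ) * ((s ^ 2 * w s : ℝ) : ℂ)) μ :=
    intS2W.ofReal.const_mul (n : ℂ)
  have intB : Integrable (fun s : ℝ => z * (s : ℂ) / (1 - z * s)) μ := by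
    have heq : (fun s : ℝ => z * (s : ℂ) / (1 - z * s))
        = fun s => z * ((s * w s : ℝ) : ℂ) - (n : ℂ) * ((s ^ 2 * w s : ℝ) : ℂ) :=
      funext hf1
    rw [heq]
    exact iB1.sub iB2
  have hB : psiR μ z = z * (Q : ℂ) - (n : ℂ) * (R : ℂ) := by
    have h1 : psiR μ z
        = ∫ s, (z * ((s * w s : ℝ) : ℂ) - (n : ℂ) * ((s ^ 2 * w s : ℝ) : ℂ)) ∂μ := by
      rw [psiR]
      exact integral_congr_ae (ae_of_all _ hf1)
    rw [h1, integral_sub iB1 iB2, integral_const_mul, integral_const_mul,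
      hcoe (fun s => s * w s), hcoe (fun s => s ^ 2 * w s), hQ_def, hR_def]
  -- A = z * (1 + psi)
  have iO1 : Integrable (fun s : ℝ => ((w s : ℝ) : ℂ)) μ := intW.ofReal
  have iO2 : Integrable (fun s : ℝ => (starRingEnd ℂ) z * ((s * w s : ℝ) : ℂ)) μ :=
    intSW.ofReal.const_mul _
  have hOne : (∫ s : ℝ, ((1 : ℂ) - z * s)⁻¹ ∂μ)
      = ((P : ℝ) : ℂ) - (starRingEnd ℂ) z * ((Q : ℝ) : ℂ) := by
    have h1 : (∫ s : ℝ, ((1 : ℂ) - z * s)⁻¹ ∂μ)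
        = ∫ s, (((w s : ℝ) : ℂ) - (starRingEnd ℂ) z * ((s * w s : ℝ) : ℂ)) ∂μ :=
      integral_congr_ae (ae_of_all _ hf2)
    rw [h1, integral_sub iO1 iO2, integral_const_mul, hcoe w, hcoe (fun s => s * w s),
      hP_def, hQ_def]
  have h1psi : (1 : ℂ) + psiR μ z = ∫ s : ℝ, ((1 : ℂ) - z * s)⁻¹ ∂μ := by
    have hp : ∀ s : ℝ, ((1 : ℂ) - z * s)⁻¹ = 1 + z * (s : ℂ) / (1 - z * s) := by
      intro s
      field_simp [hne s]
      ring
    rw [psiR]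
    rw [integral_congr_ae (ae_of_all _ hp), integral_add (integrable_const 1) intB,
      integral_const, probReal_univ]
    simp
  set Aq : ℂ := z * ((P : ℝ) : ℂ) - (n : ℂ) * ((Q : ℝ) : ℂ) with hAq_def
  have hA : Aq = z * (1 + psiR μ z) := by
    rw [h1psi, hOne, hAq_def]
    have hmc : z * (starRingEnd ℂ) z = (n : ℂ) := Complex.mul_conj z
    linear_combination (Q : ℂ) * hmc
  -- imaginary parts
  have himB : (psiR μ z).im = z.im * Q := by
    rw [hB]
    simp [Complex.sub_im, Complex.mul_im]
  have himA : Aq.im = z.im * P := by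
    rw [hAq_def]
    simp [Complex.sub_im, Complex.mul_im]
  have hreB : (psiR μ z).re = z.re * Q - n * R := by
    rw [hB]
    simp [Complex.sub_re, Complex.mul_re]
  have hreA : Aq.re = z.re * P - n * Q := by
    rw [hAq_def]
    simp [Complex.sub_re, Complex.mul_re]
  have himB' : 0 < (psiR μ z).im := by rw [himB]; exact mul_pos hz hQ
  have himA' : 0 < Aq.im := by rw [himA]; exact mul_pos hz hP
  have hB0 : psiR μ z ≠ 0 := fun h => by rw [h] at himB'; simp at himB'
  have hA0 : Aq ≠ 0 := fun h => by rw [h] at himA'; simp at himA'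
  have h1psi0 : (1 : ℂ) + psiR μ z ≠ 0 := by
    intro h
    rw [h, mul_zero] at hA
    exact hA0 hA
  have heta0 : etaR μ z ≠ 0 := div_ne_zero hB0 h1psi0
  refine ⟨heta0, ?_⟩
  have hzdiv : z / etaR μ z = Aq / psiR μ z := by
    rw [etaR, hA]
    field_simp
  -- argument computations
  have hargAB : (Aq / psiR μ z).arg = Aq.arg - (psiR μ z).arg :=
    arg_div_of_im_pos himA' himB'
  have hargAz : (Aq / z).arg = Aq.arg - z.arg := arg_div_of_im_pos himA' hz
  -- lower bound: arg Aq ≥ arg z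
  have hlow : z.arg ≤ Aq.arg := by
    have him : 0 ≤ (Aq / z).im := by
      rw [Complex.div_im]
      have hnum : Aq.im * z.re - Aq.re * z.im = n * Q * z.im := by
        rw [himA, hreA, hnval]; ring
      have : Aq.im * z.re / Complex.normSq z - Aq.re * z.im / Complex.normSq z
          = (Aq.im * z.re - Aq.re * z.im) / Complex.normSq z := by ring
      rw [this, hnum]
      positivity
    have := arg_nonneg_iff.2 him
    rw [hargAz] at this
    linarith
  -- upper bound: arg Aq ≤ arg (psiR μ z)
  have hup : Aq.arg ≤ (psiR μ z).arg := by
    have hx0 : Aq / psiR μ z ≠ 0 := div_ne_zero hA0 hB0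
    have hxim : (Aq / psiR μ z).im ≤ 0 := by
      rw [Complex.div_im]
      have hnum : Aq.im * (psiR μ z).re - Aq.re * (psiR μ z).im
          = n * z.im * (Q ^ 2 - P * R) := by
        rw [himA, hreA, himB, hreB]; ring
      have heq2 : Aq.im * (psiR μ z).re / Complex.normSq (psiR μ z)
          - Aq.re * (psiR μ z).im / Complex.normSq (psiR μ z)
          = (Aq.im * (psiR μ z).re - Aq.re * (psiR μ z).im)
            / Complex.normSq (psiR μ z) := by ring
      rw [heq2, hnum]
      apply div_nonpos_of_nonpos_of_nonneg
      · nlinarith [mul_nonneg (mul_nonneg hn.le hz.le) (sub_nonneg.2 hCS)]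
      · exact (Complex.normSq_nonneg _)
    have hxlt : (Aq / psiR μ z).arg < Real.pi := by
      rw [hargAB]
      have := arg_lt_pi_of_im_pos himA'
      have := arg_pos_of_im_pos himB'
      linarith
    by_contra hcon
    push_neg at hcon
    have hxpos : 0 < (Aq / psiR μ z).arg := by rw [hargAB]; linarith
    have hxim0 : (Aq / psiR μ z).im = 0 :=
      le_antisymm hxim (arg_nonneg_iff.1 hxpos.le)
    rcases lt_trichotomy (Aq / psiR μ z).re 0 with hre | hre | hre
    · have : (Aq / psiR μ z).arg = Real.pi := arg_eq_pi_iff.2 ⟨hre, hxim0⟩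
      rw [this] at hxlt
      exact lt_irrefl _ hxlt
    · exact hx0 (Complex.ext hre hxim0)
    · have : (Aq / psiR μ z).arg = 0 := arg_eq_zero_iff.2 ⟨hre.le, hxim0⟩
      rw [this] at hxpos
      exact lt_irrefl _ hxpos
  have hBlt : (psiR μ z).arg < Real.pi := arg_lt_pi_of_im_pos himB'
  rw [hzdiv, hargAB]
  constructor
  · linarith
  · linarith
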